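/- If there is a node with a self-loop and the graph is strongly connected, then from any initial attacker state the attacker can reach, in finitely many admissible moves, the state with all its resource Y concentrated at any prescribed node i*. -/

import Mathlib

open Finset

/-- Left-stochastic matrix supported on adjacency pattern `A`. -/
def IsStoch {I : Type*} [Fintype I] (A K : Matrix I I ℝ) : Prop :=
  (∀ i j, 0 ≤ K i j) ∧ (∀ j, ∑ i, K i j = 1) ∧ ∀ i j, A i j = 0 → K i j = 0

/-- `{0,1}`-valued left-stochastic matrix supported on `A` (extreme action). -/
def IsExtreme01 {I : Type*} [Fintype I] (A K : Matrix I I ℝ) : Prop :=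
  IsStoch A K ∧ ∀ i j, K i j = 0 ∨ K i j = 1

section aux
variable {N : ℕ}

def Kof (g : Fin N → Fin N) : Matrix (Fin N) (Fin N) ℝ :=
  fun i j => if i = g j then 1 else 0

lemma Kof_mulVec (g : Fin N → Fin N) (y : Fin N → ℝ) :
    (Kof g).mulVec y = fun i => ∑ j, if i = g j then y j else 0 := by
  funext i
  simp [Kof, Matrix.mulVec, dotProduct, ite_mul]

lemma Kof_stoch (A : Matrix (Fin N) (Fin N) ℝ)
    (g : Fin N → Fin N) (hg : ∀ j, A (g j) j = 1) : IsStoch A (Kof g) := by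
  refine ⟨fun i j => ?_, fun j => ?_, fun i j h0 => ?_⟩
  · unfold Kof; split <;> norm_num
  · simp [Kof]
  · unfold Kof
    by_cases h : i = g j
    · subst h; rw [hg j] at h0; norm_num at h0
    · simp [h]

lemma Kof_mulVec_single (g : Fin N → Fin N) (q : Fin N) (Y : ℝ) :
    (Kof g).mulVec (Pi.single q Y) = Pi.single (g q) Y := by
  funext i
  simp [Kof, Matrix.mulVec, dotProduct, Pi.single_apply, ite_mul, mul_ite]

lemma push_comp (g h : Fin N → Fin N) (y : Fin N → ℝ) (i : Fin N) :
    ∑ j, (if i = g j then (∑ k, if j = h k then y k else 0) else 0)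
      = ∑ k, if i = g (h k) then y k else 0 := by
  have key : ∀ j, (if i = g j then (∑ k, if j = h k then y k else 0) else 0)
      = ∑ k, if j = h k then (if i = g j then y k else 0) else 0 := by
    intro j; split_ifs with hij <;> simp [hij]
  rw [Finset.sum_congr rfl (fun j _ => key j), Finset.sum_comm]
  refine Finset.sum_congr rfl fun k _ => ?_
  simp

def reach (A : Matrix (Fin N) (Fin N) ℝ) (i0 : Fin N) : ℕ → Fin N → Prop
  | 0 => fun j => j = i0
  | (n+1) => fun j => j = i0 ∨ ∃ b, A b j = 1 ∧ reach A i0 n b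

lemma funnel (A : Matrix (Fin N) (Fin N) ℝ) (i0 : Fin N) (h0 : A i0 i0 = 1)
    (hsc : ∀ j, Relation.ReflTransGen (fun a b => A b a = 1) j i0) :
    ∃ (g : Fin N → Fin N) (T : ℕ), (∀ j, A (g j) j = 1) ∧ ∀ j, g^[T] j = i0 := by
  classical
  have hreach : ∀ j, ∃ n, reach A i0 n j := by
    intro j
    induction hsc j using Relation.ReflTransGen.head_induction_on with
    | refl => exact ⟨0, rfl⟩
    | head hab _ ih =>
        obtain ⟨n, hn⟩ := ih
        exact ⟨n+1, Or.inr ⟨_, hab, hn⟩⟩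
  set d : Fin N → ℕ := fun j => Nat.find (hreach j) with hd
  have hdr : ∀ j, reach A i0 (d j) j := fun j => Nat.find_spec (hreach j)
  have key : ∀ j, ∃ b, A b j = 1 ∧ (j = i0 → b = i0) ∧ (j ≠ i0 → d b < d j) := by
    intro j
    by_cases hj : j = i0
    · exact ⟨i0, by rw [hj]; exact h0, fun _ => rfl, fun h => absurd hj h⟩
    · have h1 : d j ≠ 0 := by
        intro h
        have h2 := hdr j
        rw [h] at h2
        exact hj h2
      obtain ⟨n, hn⟩ := Nat.exists_eq_succ_of_ne_zero h1
      have h2 := hdr j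
      rw [hn] at h2
      rcases h2 with h | ⟨b, hb, hrb⟩
      · exact absurd h hj
      · refine ⟨b, hb, fun h => absurd h hj, fun _ => ?_⟩
        have : d b ≤ n := Nat.find_le hrb
        omega
  choose g hg1 hg2 hg3 using key
  have hd0 : d i0 = 0 := Nat.find_eq_zero _ |>.mpr rfl
  have hiter : ∀ n j, d j ≤ n → g^[n] j = i0 := by
    intro n
    induction n with
    | zero =>
        intro j hj
        have h2 := hdr j
        rw [Nat.le_zero.mp hj] at h2
        exact h2
    | succ n ih =>
        intro j hj
        rw [Function.iterate_succ_apply]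
        apply ih
        by_cases hji : j = i0
        · rw [hg2 j hji, hd0]; omega
        · have := hg3 j hji; omega
  exact ⟨g, univ.sup d, hg1, fun j => hiter _ j (Finset.le_sup (mem_univ j))⟩

lemma path_of (A : Matrix (Fin N) (Fin N) ℝ) {a b : Fin N}
    (h : Relation.ReflTransGen (fun x y => A y x = 1) a b) :
    ∃ (m : ℕ) (p : ℕ → Fin N), p 0 = a ∧ p m = b ∧ ∀ k < m, A (p (k+1)) (p k) = 1 := by
  induction h with
  | refl => exact ⟨0, fun _ => a, rfl, rfl, by omega⟩
  | @tail b c _ hbc ih =>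
      obtain ⟨m, p, h0, hm, hs⟩ := ih
      refine ⟨m+1, fun k => if k ≤ m then p k else c, by simp [h0], by simp, ?_⟩
      intro k hk
      by_cases hkm : k < m
      · simp only [show k ≤ m by omega, show k+1 ≤ m by omega, if_true]
        exact hs k hkm
      · have : k = m := by omega
        subst this
        simp [hm, hbc]

end aux

theorem stmt15 {N : ℕ} (A : Matrix (Fin N) (Fin N) ℝ)
    (hA01 : ∀ i j, A i j = 0 ∨ A i j = 1)
    (hsc : ∀ i j : Fin N, Relation.ReflTransGen (fun a b => A b a = 1) i j)
    (hloop : ∃ i, A i i = 1)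
    (Y : ℝ) (hY : 0 ≤ Y) (y0 : Fin N → ℝ)
    (hy0 : ∀ i, 0 ≤ y0 i) (hsum : ∑ i, y0 i = Y)
    (istar : Fin N) :
    ∃ τ : ℕ, ∃ y : ℕ → Fin N → ℝ, y 0 = y0 ∧
      (∀ t < τ, ∃ F, IsStoch A F ∧ y (t + 1) = F.mulVec (y t)) ∧
      y τ = Pi.single istar Y := by
  classical
  obtain ⟨i0, hi0⟩ := hloop
  obtain ⟨g, T, hg, hgT⟩ := funnel A i0 hi0 (fun j => hsc j i0)
  obtain ⟨m, p, hp0, hpm, hps⟩ := path_of A (hsc i0 istar)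
  set y : ℕ → Fin N → ℝ := fun t =>
    if t ≤ T then (fun i => ∑ j, if i = g^[t] j then y0 j else 0)
    else Pi.single (p (min (t - T) m)) Y with hy
  -- value at time T
  have hyT : (fun i => ∑ j, if i = (g^[T]) j then y0 j else 0) = Pi.single i0 Y := by
    funext i
    have : ∀ j : Fin N, (if i = (g^[T]) j then y0 j else 0)
        = (if i = i0 then y0 j else 0) := by
      intro j; rw [hgT j]
    rw [Finset.sum_congr rfl (fun j _ => this j)]
    by_cases hi : i = i0 <;> simp [hi, Pi.single_apply, hsum]
  -- states from time T on are single point masses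
  have hlate : ∀ t, T ≤ t → y t = Pi.single (p (min (t - T) m)) Y := by
    intro t ht
    by_cases hEq : t ≤ T
    · have : t = T := le_antisymm hEq ht
      subst this
      simp only [hy, le_refl, if_pos]
      rw [hyT]
      have : t - t = 0 := by omega
      simp [this, hp0]
    · simp only [hy, if_neg hEq]
  refine ⟨T + m, y, ?_, ?_, ?_⟩
  · -- y 0 = y0
    simp only [hy, Nat.zero_le, if_pos, Function.iterate_zero, id]
    funext i
    show (∑ j, if i = j then y0 j else 0) = y0 i
    simp
  · intro t ht
    by_cases htT : t < T
    · refine ⟨Kof g, Kof_stoch A g hg, ?_⟩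
      have h1 : t ≤ T := by omega
      have h2 : t + 1 ≤ T := by omega
      simp only [hy, if_pos h1, if_pos h2]
      rw [Kof_mulVec]
      funext i
      rw [push_comp g (g^[t]) y0 i]
      refine Finset.sum_congr rfl fun j _ => ?_
      rw [Function.iterate_succ_apply' g t j]
    · -- phase 2
      have hTt : T ≤ t := by omega
      set k := t - T with hk
      have hkm : k < m := by omega
      set g2 : Fin N → Fin N := Function.update g (p k) (p (k+1)) with hg2
      have hg2A : ∀ j, A (g2 j) j = 1 := by
        intro j
        by_cases hj : j = p k
        · subst hj; simp only [hg2, Function.update_self]; exact hps k hkm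
        · simp only [hg2, Function.update_of_ne hj]; exact hg j
      refine ⟨Kof g2, Kof_stoch A g2 hg2A, ?_⟩
      have hyt : y t = Pi.single (p k) Y := by
        rw [hlate t hTt]
        have hmin : min (t - T) m = k := by omega
        rw [hmin]
      have hyt1 : y (t+1) = Pi.single (p (k+1)) Y := by
        rw [hlate (t+1) (by omega)]
        have hmin : min (t + 1 - T) m = k + 1 := by omega
        rw [hmin]
      rw [hyt, hyt1, Kof_mulVec_single]
      congr 1
      simp [hg2, Function.update_self]
  · -- final state
    rw [hlate (T + m) (by omega)]
    congr 1
    rw [show T + m - T = m by omega, min_self, hpm]
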